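/- Let F, G : F_2^{2b} → F_2^b be orthogonal CA defined by bipermutive rules (z ↦ (F(z), G(z)) is a bijection). Then for any coordinates 1 ≤ i ≤ b and 1 ≤ j ≤ b and any pair (a, c) ∈ F_2^2, the number of z ∈ F_2^{2b} with F(z)_i = a and G(z)_j = c is exactly 2^{2b−2}. -/

import Mathlib

open Finset

/-- A local rule `f : F_2^d → F_2` is bipermutive if
`f(x₁,…,x_d) = x₁ ⊕ φ(x₂,…,x_{d-1}) ⊕ x_d` for some `φ`. -/
def Bipermutive {d : ℕ} (hd : 2 ≤ d) (f : (Fin d → ZMod 2) → ZMod 2) : Prop :=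
  ∃ φ : (Fin (d - 2) → ZMod 2) → ZMod 2, ∀ x : Fin d → ZMod 2,
    f x = x ⟨0, by omega⟩
        + φ (fun i => x ⟨i.val + 1, by have := i.isLt; omega⟩)
        + x ⟨d - 1, by omega⟩

/-- The no-boundary CA `F : F_2^{2b} → F_2^b` with local rule `f` of diameter `d = b + 1`:
it applies `f` to each of the `b` windows of `d` consecutive input bits. -/
def CA2 {b : ℕ} (f : (Fin (b + 1) → ZMod 2) → ZMod 2)
    (z : Fin (2 * b) → ZMod 2) (i : Fin b) : ZMod 2 :=
  f fun j => z ⟨i.val + j.val, by have hi := i.isLt; have hj := j.isLt; omega⟩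

/-- Concatenation of two `b`-bit vectors into a `2b`-bit vector. -/
def concat {b : ℕ} (x y : Fin b → ZMod 2) (i : Fin (2 * b)) : ZMod 2 :=
  if h : i.val < b then x ⟨i.val, h⟩ else y ⟨i.val - b, by have := i.isLt; omega⟩


lemma card_eval_fiber (b : ℕ) (i : Fin b) (a : ZMod 2) :
    2 * (univ.filter fun u : Fin b → ZMod 2 => u i = a).card = 2 ^ b := by
  classical
  have hflip : ∀ x : ZMod 2, x + 1 ≠ x := by decide
  have hxx : ∀ x : ZMod 2, x + 1 + 1 = x := by decide
  have hinv : ∀ u : Fin b → ZMod 2,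
      Function.update (Function.update u i (u i + 1)) i
        (Function.update u i (u i + 1) i + 1) = u := by
    intro u
    funext k
    by_cases hk : k = i
    · subst hk; simp [Function.update_self, hxx]
    · simp [Function.update_of_ne hk]
  have h1 : (univ.filter fun u : Fin b → ZMod 2 => u i = a).card
      = (univ.filter fun u : Fin b → ZMod 2 => ¬ u i = a).card := by
    apply Finset.card_nbij' (fun u => Function.update u i (u i + 1))
      (fun u => Function.update u i (u i + 1))
    · intro u hu
      simp only [coe_filter, Set.mem_setOf_eq, mem_filter, mem_univ, true_and] at hu ⊢
      rw [Function.update_self, hu]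
      exact hflip a
    · intro u hu
      simp only [coe_filter, Set.mem_setOf_eq, mem_filter, mem_univ, true_and] at hu ⊢
      rw [Function.update_self]
      revert hu; generalize u i = x; revert x; revert a; decide
    · intro u _; exact hinv u
    · intro u _; exact hinv u
  have h2 := Finset.card_filter_add_card_filter_not
    (s := (univ : Finset (Fin b → ZMod 2))) (p := fun u => u i = a)
  have h3 : (univ : Finset (Fin b → ZMod 2)).card = 2 ^ b := by
    simp [Fintype.card_fun]
  rw [two_mul, h1]
  rw [h1, h3] at h2
  exact h2

lemma card_eval_fiber' {b : ℕ} (hb : 1 ≤ b) (i : Fin b) (a : ZMod 2) :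
    (univ.filter fun u : Fin b → ZMod 2 => u i = a).card = 2 ^ (b - 1) := by
  have h := card_eval_fiber b i a
  have h2 : 2 ^ b = 2 * 2 ^ (b - 1) := by
    rw [← pow_succ', Nat.sub_add_cancel hb]
  rw [h2] at h
  exact Nat.eq_of_mul_eq_mul_left (by norm_num) h

/-- For orthogonal bipermutive CA `F, G : F_2^{2b} → F_2^b`, any coordinates `i, j` and any
pair of bits `(a, c)`, exactly `2^{2b-2}` inputs `z` satisfy `F(z)_i = a` and `G(z)_j = c`. -/
theorem two_CA_columns_balanced {b : ℕ} (hb : 1 ≤ b)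
    (f g : (Fin (b + 1) → ZMod 2) → ZMod 2)
    (hf : Bipermutive (by omega) f) (hg : Bipermutive (by omega) g)
    (horth : Function.Bijective fun z : Fin (2 * b) → ZMod 2 => (CA2 f z, CA2 g z))
    (i j : Fin b) (a c : ZMod 2) :
    (univ.filter fun z : Fin (2 * b) → ZMod 2 =>
      CA2 f z i = a ∧ CA2 g z j = c).card = 2 ^ (2 * b - 2) := by
  classical
  have key : (univ.filter fun z : Fin (2 * b) → ZMod 2 =>
        CA2 f z i = a ∧ CA2 g z j = c).card
      = (univ.filter fun p : (Fin b → ZMod 2) × (Fin b → ZMod 2) =>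
        p.1 i = a ∧ p.2 j = c).card := by
    apply Finset.card_nbij (fun z => (CA2 f z, CA2 g z))
    · intro z hz
      simp only [coe_filter, Set.mem_setOf_eq, mem_filter, mem_univ, true_and] at hz ⊢
      exact hz
    · intro z1 _ z2 _ h
      exact horth.1 h
    · intro p hp
      obtain ⟨z, hz⟩ := horth.2 p
      refine ⟨z, ?_, hz⟩
      simp only [coe_filter, Set.mem_setOf_eq, mem_univ, true_and] at hp ⊢
      rw [show CA2 f z = p.1 from congrArg Prod.fst hz,
          show CA2 g z = p.2 from congrArg Prod.snd hz]
      exact hp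
  rw [key]
  have : (univ.filter fun p : (Fin b → ZMod 2) × (Fin b → ZMod 2) =>
        p.1 i = a ∧ p.2 j = c)
      = (univ.filter fun u : Fin b → ZMod 2 => u i = a) ×ˢ
        (univ.filter fun v : Fin b → ZMod 2 => v j = c) := by
    ext p
    simp [mem_filter, mem_product]
  rw [this, Finset.card_product, card_eval_fiber' hb i a, card_eval_fiber' hb j c,
    ← pow_add]
  congr 1
  omega
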